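/- Let n ≥ 22 be a natural number and let α be a real number with 1 ≤ α ≤ √n. Then the sum of θ(n−k) over the integers k with 1 ≤ k ≤ √n/α is strictly less than (1/α)·√n·log(n) + 2·(1 + 0.6/α)·√n. -/

import Mathlib

open Finset

/-- Step 1: divisor count bounded by twice count of small divisors. -/
lemma aux_step1 (m s : ℕ) (hm : 1 ≤ m) (hs : Nat.sqrt m ≤ s) :
    m.divisors.card ≤ 2 * ((Finset.Icc 1 s).filter (· ∣ m)).card := by
  apply Finset.card_le_mul_card_image_of_maps_to
    (f := fun a => if a ≤ s then a else m / a)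
  · intro a ha
    rw [Nat.mem_divisors] at ha
    obtain ⟨hdvd, hm0⟩ := ha
    have ha1 : 1 ≤ a := Nat.pos_of_dvd_of_pos hdvd (by omega)
    by_cases h : a ≤ s
    · simp only [if_pos h, Finset.mem_filter, Finset.mem_Icc]
      exact ⟨⟨ha1, h⟩, hdvd⟩
    · have hgt : Nat.sqrt m < a := lt_of_le_of_lt hs (lt_of_not_ge h)
      have hdvd' : m / a ∣ m := Nat.div_dvd_of_dvd hdvd
      have ham : a ≤ m := Nat.le_of_dvd (by omega) hdvd
      have h1 : 1 ≤ m / a := Nat.one_le_div_iff (by omega) |>.mpr ham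
      have h2 : m / a ≤ Nat.sqrt m := by
        have := Nat.lt_succ_sqrt m
        have hle : m / a ≤ m / (Nat.sqrt m + 1) := Nat.div_le_div_left (by omega) (by omega)
        have : m / (Nat.sqrt m + 1) ≤ Nat.sqrt m := by
          rw [Nat.div_le_iff_le_mul_add_pred (by omega)]
          have h3 := Nat.lt_succ_sqrt m
          simp only [Nat.succ_eq_add_one] at h3
          have h4 : (Nat.sqrt m + 1) * (Nat.sqrt m + 1)
              = (Nat.sqrt m + 1) * Nat.sqrt m + Nat.sqrt m + 1 := by ring
          omega
        omega
      simp only [if_neg h, Finset.mem_filter, Finset.mem_Icc]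
      exact ⟨⟨h1, le_trans h2 hs⟩, hdvd'⟩
  · intro b hb
    have hsub : (m.divisors.filter
        (fun a => (if a ≤ s then a else m / a) = b)) ⊆ {b, m / b} := by
      intro a ha
      simp only [Finset.mem_filter, Nat.mem_divisors] at ha
      obtain ⟨⟨hdvd, hm0⟩, heq⟩ := ha
      simp only [Finset.mem_insert, Finset.mem_singleton]
      by_cases h : a ≤ s
      · left; rw [if_pos h] at heq; exact heq.symm ▸ rfl
      · right
        rw [if_neg h] at heq
        have : m / (m / a) = a := Nat.div_div_self hdvd (by omega)
        rw [← heq, this]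
    calc (m.divisors.filter (fun a => (if a ≤ s then a else m / a) = b)).card
        ≤ ({b, m / b} : Finset ℕ).card := Finset.card_le_card hsub
      _ ≤ 2 := by
          apply le_trans (Finset.card_insert_le _ _)
          simp

lemma aux_step2 (n K s : ℕ) :
    ∑ k ∈ Finset.Icc 1 K, ((Finset.Icc 1 s).filter (· ∣ (n - k))).card
      = ∑ d ∈ Finset.Icc 1 s, ((Finset.Icc 1 K).filter (fun k => d ∣ n - k)).card := by
  simp_rw [Finset.card_filter]
  exact Finset.sum_comm

lemma aux_step3 (n K d : ℕ) (hd : 1 ≤ d) (hKn : K ≤ n) :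
    ((Finset.Icc 1 K).filter (fun k => d ∣ n - k)).card ≤ (K - 1) / d + 1 := by
  set T := (Finset.Icc 1 K).filter (fun k => d ∣ n - k) with hT
  rcases T.eq_empty_or_nonempty with h | h
  · simp [h]
  · set k₀ := T.min' h with hk0
    have hk₀T : k₀ ∈ T := T.min'_mem h
    have hk₀ : 1 ≤ k₀ ∧ k₀ ≤ K ∧ d ∣ n - k₀ := by
      have := hk₀T
      rw [hT, Finset.mem_filter, Finset.mem_Icc] at this
      exact ⟨this.1.1, this.1.2, this.2⟩
    have key : ∀ k ∈ T, d ∣ k - k₀ := by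
      intro k hk
      rw [hT, Finset.mem_filter, Finset.mem_Icc] at hk
      have hmin : k₀ ≤ k := Finset.min'_le T k (by rw [hT, Finset.mem_filter, Finset.mem_Icc]; exact hk)
      have h1 : d ∣ (n - k₀) - (n - k) := Nat.dvd_sub hk₀.2.2 hk.2
      have h2 : (n - k₀) - (n - k) = k - k₀ := by omega
      rwa [h2] at h1
    have hcard : T.card ≤ (Finset.range ((K - 1) / d + 1)).card := by
      apply Finset.card_le_card_of_injOn (fun k => (k - k₀) / d)
      · intro k hk
        have hkT : k ∈ T := hk
        rw [hT, Finset.mem_filter, Finset.mem_Icc] at hkT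
        have hmin : k₀ ≤ k := Finset.min'_le T k hk
        simp only [Finset.mem_coe, Finset.mem_range]
        have : (k - k₀) / d ≤ (K - 1) / d := Nat.div_le_div_right (by omega)
        omega
      · intro a ha b hb hab
        have hda := key a ha
        have hdb := key b hb
        have hma : k₀ ≤ a := Finset.min'_le T a ha
        have hmb : k₀ ≤ b := Finset.min'_le T b hb
        have h1 : a - k₀ = d * ((a - k₀) / d) := (Nat.mul_div_cancel' hda).symm
        have h2 : b - k₀ = d * ((b - k₀) / d) := (Nat.mul_div_cancel' hdb).symm
        simp only at hab
        rw [← hab] at h2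
        omega
    simpa using hcard

noncomputable def Hh (D : ℕ) : ℝ := ∑ d ∈ Finset.Icc 1 D, (1 : ℝ) / d

lemma Hh_nonneg (D : ℕ) : 0 ≤ Hh D := by
  apply Finset.sum_nonneg
  intro d _
  positivity

lemma Hh_succ (D : ℕ) : Hh (D + 1) = Hh D + 1 / (D + 1) := by
  rw [Hh, Hh, Finset.sum_Icc_succ_top (by omega)]
  push_cast
  ring

lemma c_anti {a b : ℕ} (ha : 1 ≤ a) (hab : a ≤ b) :
    Hh b - Real.log b ≤ Hh a - Real.log a := by
  induction b, hab using Nat.le_induction with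
  | base => exact le_refl _
  | succ m hm ih =>
    refine le_trans ?_ ih
    have hm1 : (1 : ℝ) ≤ m := by exact_mod_cast le_trans ha hm
    have hmpos : (0 : ℝ) < m := by linarith
    have hkey : 1 / ((m : ℝ) + 1) ≤ Real.log (m + 1) - Real.log m := by
      have hx : (0 : ℝ) < (m : ℝ) / (m + 1) := by positivity
      have := Real.log_le_sub_one_of_pos hx
      rw [Real.log_div (by positivity) (by positivity)] at this
      have heq : (m : ℝ) / (m + 1) - 1 = -(1 / (m + 1)) := by
        field_simp
        ring
      rw [heq] at this
      linarith
    rw [Hh_succ]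
    push_cast
    linarith

lemma Hh_32 : Hh 32 = 586061125622639 / 144403552893600 := by
  rw [Hh, ← Finset.Ico_add_one_right_eq_Icc, Finset.sum_Ico_eq_sum_range]
  norm_num [Finset.sum_range_succ]

lemma Hh_16 : Hh 16 = 2436559 / 720720 := by
  rw [Hh, ← Finset.Ico_add_one_right_eq_Icc, Finset.sum_Ico_eq_sum_range]
  norm_num [Finset.sum_range_succ]

lemma Hh_8 : Hh 8 = 761 / 280 := by
  rw [Hh, ← Finset.Ico_add_one_right_eq_Icc, Finset.sum_Ico_eq_sum_range]
  norm_num [Finset.sum_range_succ]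

lemma Hh_4 : Hh 4 = 25 / 12 := by
  rw [Hh, ← Finset.Ico_add_one_right_eq_Icc, Finset.sum_Ico_eq_sum_range]
  norm_num [Finset.sum_range_succ]

set_option maxHeartbeats 1600000 in
/-- For a natural number `n ≥ 22` and a real `α` with `1 ≤ α ≤ √n`,
the sum of the number-of-divisors function `θ(n-k)` over integers `k` with
`1 ≤ k ≤ √n / α` is strictly less than `(1/α)·√n·log n + 2·(1 + 0.6/α)·√n`. -/
theorem sum_divisors_bound (n : ℕ) (hn : 22 ≤ n) (α : ℝ) (hα1 : 1 ≤ α)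
    (hα2 : α ≤ Real.sqrt n) :
    (∑ k ∈ Finset.Icc 1 ⌊Real.sqrt n / α⌋₊, ((n - k).divisors.card : ℝ)) <
      (1 / α) * Real.sqrt n * Real.log n + 2 * (1 + 0.6 / α) * Real.sqrt n := by
  have hα0 : (0 : ℝ) < α := lt_of_lt_of_le one_pos hα1
  set R := Real.sqrt n with hRdef
  have hnR : (0 : ℝ) < n := by positivity
  have hR0 : 0 < R := Real.sqrt_pos.mpr hnR
  set K := ⌊R / α⌋₊ with hKdef
  set s := Nat.sqrt (n - 1) with hsdef
  set K' := R / α with hK'def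
  set L := Real.log n with hLdef
  have hK'1 : (1 : ℝ) ≤ K' := (one_le_div hα0).mpr hα2
  have hKle : (K : ℝ) ≤ K' := Nat.floor_le (by positivity)
  have hK1 : 1 ≤ K := Nat.floor_pos.mpr hK'1
  have hK'R : K' ≤ R := by
    rw [hK'def, div_le_iff₀ hα0]; nlinarith
  -- basic facts about s
  have hs4 : 4 ≤ s := Nat.le_sqrt.mpr (by omega)
  have hss : s * s ≤ n - 1 := Nat.sqrt_le (n - 1)
  have hlt : n - 1 < (s + 1) * (s + 1) := by
    have := Nat.lt_succ_sqrt (n - 1)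
    simpa [Nat.succ_eq_add_one] using this
  have hnle : (n : ℝ) ≤ ((s : ℝ) + 1) ^ 2 := by
    have : n ≤ (s + 1) * (s + 1) := by omega
    have := (Nat.cast_le (α := ℝ)).mpr this
    push_cast at this
    nlinarith [this]
  have hRs1 : R ≤ (s : ℝ) + 1 := by
    rw [hRdef]
    rw [show ((s : ℝ) + 1) = Real.sqrt (((s : ℝ) + 1) ^ 2) from
      (Real.sqrt_sq (by positivity)).symm]
    exact Real.sqrt_le_sqrt hnle
  have hKs1 : K ≤ s + 1 := by
    have : (K : ℝ) ≤ (s : ℝ) + 1 := le_trans hKle (le_trans hK'R hRs1)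
    exact_mod_cast this
  have h4s : 4 * s ≤ s * s := Nat.mul_le_mul_right s hs4
  have hKn1 : K ≤ n - 1 := by omega
  -- nat-level chain
  have hnat : (∑ k ∈ Finset.Icc 1 K, (n - k).divisors.card)
      ≤ 2 * ∑ d ∈ Finset.Icc 1 s, ((K - 1) / d + 1) := by
    calc ∑ k ∈ Finset.Icc 1 K, (n - k).divisors.card
        ≤ ∑ k ∈ Finset.Icc 1 K,
            2 * ((Finset.Icc 1 s).filter (· ∣ (n - k))).card := by
          apply Finset.sum_le_sum
          intro k hk
          rw [Finset.mem_Icc] at hk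
          exact aux_step1 (n - k) s (by omega) (Nat.sqrt_le_sqrt (by omega))
      _ = 2 * ∑ k ∈ Finset.Icc 1 K,
            ((Finset.Icc 1 s).filter (· ∣ (n - k))).card := by
          rw [Finset.mul_sum]
      _ = 2 * ∑ d ∈ Finset.Icc 1 s,
            ((Finset.Icc 1 K).filter (fun k => d ∣ n - k)).card := by
          rw [aux_step2]
      _ ≤ 2 * ∑ d ∈ Finset.Icc 1 s, ((K - 1) / d + 1) := by
          apply Nat.mul_le_mul_left
          apply Finset.sum_le_sum
          intro d hd
          rw [Finset.mem_Icc] at hd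
          exact aux_step3 n K d hd.1 (by omega)
  -- real-level bound
  have hreal1 : (∑ k ∈ Finset.Icc 1 K, ((n - k).divisors.card : ℝ))
      ≤ 2 * ((K : ℝ) - 1) * Hh s + 2 * s := by
    have h1 : (∑ k ∈ Finset.Icc 1 K, ((n - k).divisors.card : ℝ))
        ≤ ((2 * ∑ d ∈ Finset.Icc 1 s, ((K - 1) / d + 1) : ℕ) : ℝ) := by
      exact_mod_cast hnat
    refine le_trans h1 ?_
    push_cast
    have h2 : ∑ d ∈ Finset.Icc 1 s, ((((K - 1) / d : ℕ) : ℝ) + 1)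
        ≤ ∑ d ∈ Finset.Icc 1 s, (((K : ℝ) - 1) * (1 / d) + 1) := by
      apply Finset.sum_le_sum
      intro d hd
      rw [Finset.mem_Icc] at hd
      have hc1 : (((K - 1) / d : ℕ) : ℝ) ≤ ((K - 1 : ℕ) : ℝ) / d := Nat.cast_div_le
      have hc2 : ((K - 1 : ℕ) : ℝ) = (K : ℝ) - 1 := by
        push_cast [hK1]; ring
      rw [hc2] at hc1
      have : ((K : ℝ) - 1) / d = ((K : ℝ) - 1) * (1 / d) := by ring
      linarith [hc1, this ▸ hc1]
    have h3 : ∑ d ∈ Finset.Icc 1 s, (((K : ℝ) - 1) * (1 / d) + 1)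
        = ((K : ℝ) - 1) * Hh s + s := by
      rw [Finset.sum_add_distrib, ← Finset.mul_sum]
      simp [Hh, Nat.card_Icc]
    calc (2 : ℝ) * ∑ d ∈ Finset.Icc 1 s, ((((K - 1) / d : ℕ) : ℝ) + 1)
        ≤ 2 * (((K : ℝ) - 1) * Hh s + s) := by linarith [h2]
      _ = 2 * ((K : ℝ) - 1) * Hh s + 2 * s := by ring
  -- now the analytic estimate
  have hRHS : (1 / α) * R * L + 2 * (1 + 0.6 / α) * R = K' * L + 1.2 * K' + 2 * R := by
    rw [hK'def]; field_simp; ring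
  rw [hRHS]
  have hsR : (s : ℝ) < R := by
    rw [hRdef]
    apply (Real.lt_sqrt (by positivity)).mpr
    have h : s * s < n := by omega
    have h' : ((s * s : ℕ) : ℝ) < n := by exact_mod_cast h
    push_cast at h'
    nlinarith [h']
  have hL0 : (0 : ℝ) ≤ L := Real.log_nonneg (by exact_mod_cast Nat.one_le_iff_ne_zero.mpr (by omega))
  have h2ls : 2 * Real.log s ≤ L := by
    rw [show (2 : ℝ) * Real.log s = Real.log ((s : ℝ) ^ 2) by
      rw [Real.log_pow]; push_cast; ring]
    apply Real.log_le_log (by positivity)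
    have : s * s ≤ n := by omega
    have := (Nat.cast_le (α := ℝ)).mpr this
    push_cast at this
    nlinarith [this]
  set c := Hh s - Real.log s with hcdef
  have hl2 := Real.log_two_gt_d9
  have hl2u := Real.log_two_lt_d9
  -- the case analysis for 2*(K'-1)*c ≤ L + 1.2*K'
  have hcase : 2 * (K' - 1) * c ≤ L + 1.2 * K' := by
    have hKnn : (0 : ℝ) ≤ 2 * (K' - 1) := by linarith
    have hK'M : K' ≤ (s : ℝ) + 1 := le_trans hK'R hRs1
    rcases le_or_gt 32 s with h32 | h32
    · have hc : c ≤ Hh 32 - Real.log ((32 : ℕ) : ℝ) := c_anti (by norm_num) h32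
      have hl32 : Real.log ((32 : ℕ) : ℝ) = 5 * Real.log 2 := by
        rw [show ((32 : ℕ) : ℝ) = 2 ^ (5 : ℕ) by norm_num, Real.log_pow]
        norm_num
      rw [Hh_32, hl32] at hc
      have hc6 : c ≤ 0.6 := by linarith [hl2]
      have h1 := mul_le_mul_of_nonneg_left hc6 hKnn
      linarith [h1, hL0]
    · rcases le_or_gt 16 s with h16 | h16
      · have hc : c ≤ Hh 16 - Real.log ((16 : ℕ) : ℝ) := c_anti (by norm_num) h16
        have hl16 : Real.log ((16 : ℕ) : ℝ) = 4 * Real.log 2 := by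
          rw [show ((16 : ℕ) : ℝ) = 2 ^ (4 : ℕ) by norm_num, Real.log_pow]
          norm_num
        rw [Hh_16, hl16] at hc
        have hM : K' ≤ 32 := by
          have : (s : ℝ) ≤ 31 := by exact_mod_cast Nat.lt_succ_iff.mp h32
          linarith
        have hLlow : 8 * Real.log 2 ≤ L := by
          have hnn : (256 : ℕ) ≤ n := by
            have := Nat.mul_le_mul h16 h16
            omega
          have h256 : (256 : ℝ) ≤ (n : ℝ) := by exact_mod_cast hnn
          calc 8 * Real.log 2 = Real.log ((2 : ℝ) ^ (8 : ℕ)) := by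
                rw [Real.log_pow]; norm_num
            _ ≤ L := Real.log_le_log (by positivity) (by norm_num; linarith)
        have h1 := mul_le_mul_of_nonneg_left hc hKnn
        have h2 : (2 * ((2436559 : ℝ) / 720720 - 4 * Real.log 2) - 1.2) * K'
            ≤ (2 * ((2436559 : ℝ) / 720720 - 4 * Real.log 2) - 1.2) * 32 :=
          mul_le_mul_of_nonneg_left hM (by linarith [hl2u])
        nlinarith [h1, h2, hLlow, hl2]
      rcases le_or_gt 8 s with h8 | h8
      · have hc : c ≤ Hh 8 - Real.log ((8 : ℕ) : ℝ) := c_anti (by norm_num) h8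
        have hl8 : Real.log ((8 : ℕ) : ℝ) = 3 * Real.log 2 := by
          rw [show ((8 : ℕ) : ℝ) = 2 ^ (3 : ℕ) by norm_num, Real.log_pow]
          norm_num
        rw [Hh_8, hl8] at hc
        have hM : K' ≤ 16 := by
          have : (s : ℝ) ≤ 15 := by exact_mod_cast Nat.lt_succ_iff.mp h16
          linarith
        have hLlow : 6 * Real.log 2 ≤ L := by
          have hnn : (64 : ℕ) ≤ n := by
            have := Nat.mul_le_mul h8 h8
            omega
          have h64 : (64 : ℝ) ≤ (n : ℝ) := by exact_mod_cast hnn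
          calc 6 * Real.log 2 = Real.log ((2 : ℝ) ^ (6 : ℕ)) := by
                rw [Real.log_pow]; norm_num
            _ ≤ L := Real.log_le_log (by positivity) (by norm_num; linarith)
        have h1 := mul_le_mul_of_nonneg_left hc hKnn
        have h2 : (2 * ((761 : ℝ) / 280 - 3 * Real.log 2) - 1.2) * K'
            ≤ (2 * ((761 : ℝ) / 280 - 3 * Real.log 2) - 1.2) * 16 :=
          mul_le_mul_of_nonneg_left hM (by linarith [hl2u])
        nlinarith [h1, h2, hLlow, hl2]
      · have hc : c ≤ Hh 4 - Real.log ((4 : ℕ) : ℝ) := c_anti (by norm_num) hs4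
        have hl4 : Real.log ((4 : ℕ) : ℝ) = 2 * Real.log 2 := by
          rw [show ((4 : ℕ) : ℝ) = 2 ^ (2 : ℕ) by norm_num, Real.log_pow]
          norm_num
        rw [Hh_4, hl4] at hc
        have hM : K' ≤ 8 := by
          have : (s : ℝ) ≤ 7 := by exact_mod_cast Nat.lt_succ_iff.mp h8
          linarith
        have hLlow : 4 * Real.log 2 ≤ L := by
          have h16' : (16 : ℝ) ≤ (n : ℝ) := by exact_mod_cast (by omega : (16 : ℕ) ≤ n)
          calc 4 * Real.log 2 = Real.log ((2 : ℝ) ^ (4 : ℕ)) := by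
                rw [Real.log_pow]; norm_num
            _ ≤ L := Real.log_le_log (by positivity) (by norm_num; linarith)
        have h1 := mul_le_mul_of_nonneg_left hc hKnn
        have h2 : (2 * ((25 : ℝ) / 12 - 2 * Real.log 2) - 1.2) * K'
            ≤ (2 * ((25 : ℝ) / 12 - 2 * Real.log 2) - 1.2) * 8 :=
          mul_le_mul_of_nonneg_left hM (by linarith [hl2u])
        nlinarith [h1, h2, hLlow, hl2]
  -- assemble
  have hmono : 2 * ((K : ℝ) - 1) * Hh s ≤ 2 * (K' - 1) * Hh s := by
    nlinarith [Hh_nonneg s, hKle]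
  have hHexp : 2 * (K' - 1) * Hh s = (K' - 1) * (2 * Real.log s) + 2 * (K' - 1) * c := by
    rw [hcdef]; ring
  have hls : (K' - 1) * (2 * Real.log s) ≤ (K' - 1) * L :=
    mul_le_mul_of_nonneg_left h2ls (by linarith)
  calc (∑ k ∈ Finset.Icc 1 K, ((n - k).divisors.card : ℝ))
      ≤ 2 * ((K : ℝ) - 1) * Hh s + 2 * s := hreal1
    _ ≤ (K' - 1) * L + (L + 1.2 * K') + 2 * s := by
        rw [← hHexp] at *
        linarith [hmono, hls, hcase, hHexp ▸ le_refl (2 * (K' - 1) * Hh s)]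
    _ < K' * L + 1.2 * K' + 2 * R := by linarith [hsR]
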